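/- Uniqueness of the projective homomorphism on 𝒞: every projection-valued clone homomorphism ξ on 𝒞 satisfies ξₙ(f) = i whenever f ∈ 𝒞ₙ eventually acts as some order automorphism at coordinate i above some threshold. Consequently, there is exactly one projection-valued clone homomorphism on 𝒞. -/

import Mathlib

/-- `f` preserves `<` (is a polymorphism of `(ℚ, <)`). -/
def PreservesLt {n : ℕ} (f : (Fin n → ℚ) → ℚ) : Prop :=
  ∀ u v : Fin n → ℚ, (∀ j, u j < v j) → f u < f v

/-- `f` eventually acts as the order automorphism `α` at coordinate `i` above threshold `a`. -/
def EventuallyActsAs {n : ℕ} (f : (Fin n → ℚ) → ℚ) (α : ℚ ≃o ℚ) (i : Fin n) (a : ℚ) : Prop :=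
  ∀ u : Fin n → ℚ, (∀ j, a < u j) → f u = α (u i)

/-- The clone `𝒞`: `n`-ary functions preserving `<` that eventually act as some order
automorphism at some coordinate above some threshold. -/
def CloneC (n : ℕ) : Set ((Fin n → ℚ) → ℚ) :=
  {f | PreservesLt f ∧ ∃ (i : Fin n) (a : ℚ) (α : ℚ ≃o ℚ), EventuallyActsAs f α i a}

/-- A projection-valued clone homomorphism on `𝒞`: a family of maps `ξ n : 𝒞ₙ → Fin n`
sending projections to their index and compatible with composition (this encodes a clone
homomorphism from `𝒞` to the projection clone `𝟏`). -/
structure ProjHom where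
  ξ : ∀ (n : ℕ) (f : (Fin n → ℚ) → ℚ), f ∈ CloneC n → Fin n
  proj_eq : ∀ (n : ℕ) (i : Fin n) (h : (fun u : Fin n → ℚ => u i) ∈ CloneC n),
    ξ n (fun u => u i) h = i
  comp_eq : ∀ (m n : ℕ) (f : (Fin n → ℚ) → ℚ) (hf : f ∈ CloneC n)
    (g : Fin n → ((Fin m → ℚ) → ℚ)) (hg : ∀ k, g k ∈ CloneC m)
    (hc : (fun u : Fin m → ℚ => f (fun k => g k u)) ∈ CloneC m),
    ξ m (fun u => f (fun k => g k u)) hc = ξ m (g (ξ n f hf)) (hg (ξ n f hf))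

def phiAux (a x : ℚ) : ℚ :=
  if a + 1 ≤ x then x else (a + 1) - (a + 1 - x) / (1 + (a + 1 - x))

lemma phiAux_gt (a x : ℚ) : a < phiAux a x := by
  unfold phiAux
  split_ifs with h
  · linarith
  · have ht : 0 < a + 1 - x := by linarith
    have h1 : 0 < 1 + (a + 1 - x) := by linarith
    have : (a + 1 - x) / (1 + (a + 1 - x)) < 1 := by
      rw [div_lt_one h1]; linarith
    linarith

lemma phiAux_eq (a x : ℚ) (h : a + 1 ≤ x) : phiAux a x = x := if_pos h

lemma phiAux_mono (a : ℚ) : StrictMono (phiAux a) := by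
  intro x y hxy
  unfold phiAux
  split_ifs with hx hy hy
  · exact hxy
  · linarith
  · have ht : 0 < a + 1 - x := by linarith
    have h1 : 0 < 1 + (a + 1 - x) := by linarith
    have hpos : 0 < (a + 1 - x) / (1 + (a + 1 - x)) := div_pos ht h1
    linarith
  · have htx : 0 < a + 1 - x := by linarith
    have hty : 0 < a + 1 - y := by linarith
    have h1x : 0 < 1 + (a + 1 - x) := by linarith
    have h1y : 0 < 1 + (a + 1 - y) := by linarith
    have : (a + 1 - y) / (1 + (a + 1 - y)) < (a + 1 - x) / (1 + (a + 1 - x)) := by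
      rw [div_lt_div_iff₀ h1y h1x]; nlinarith
    linarith

lemma proj_mem {n : ℕ} (k : Fin n) : (fun u : Fin n → ℚ => u k) ∈ CloneC n :=
  ⟨fun _ _ h => h k, k, 0, OrderIso.refl ℚ, fun _ _ => rfl⟩

lemma xi_congr (H : ProjHom) {n : ℕ} {f f' : (Fin n → ℚ) → ℚ} (h : f = f')
    (hf : f ∈ CloneC n) (hf' : f' ∈ CloneC n) : H.ξ n f hf = H.ξ n f' hf' := by
  subst h; rfl

/-- Post-composing a projection with a unary member of `𝒞` does not change `ξ`. -/
lemma xi_comp_unary (H : ProjHom) {m : ℕ} (β : ℚ → ℚ)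
    (hβ : (fun v : Fin 1 → ℚ => β (v 0)) ∈ CloneC 1) (k : Fin m)
    (h : (fun u : Fin m → ℚ => β (u k)) ∈ CloneC m) : H.ξ m (fun u => β (u k)) h = k := by
  have := H.comp_eq m 1 (fun v => β (v 0)) hβ (fun _ => fun u => u k)
    (fun _ => proj_mem k) h
  rw [this]
  exact H.proj_eq m k (proj_mem k)

lemma xi_eq (H : ProjHom) {n : ℕ} (f : (Fin n → ℚ) → ℚ) (hf : f ∈ CloneC n)
    (i : Fin n) (α : ℚ ≃o ℚ) (a : ℚ) (hev : EventuallyActsAs f α i a) :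
    H.ξ n f hf = i := by
  -- membership of the squashed coordinate functions
  have hg : ∀ k : Fin n, (fun u : Fin n → ℚ => phiAux a (u k)) ∈ CloneC n := fun k =>
    ⟨fun u v h => phiAux_mono a (h k), k, a + 1, OrderIso.refl ℚ,
      fun u hu => phiAux_eq a (u k) (le_of_lt (hu k))⟩
  -- the composite h := f ∘ (phiAux a ∘ proj)
  have hcval : ∀ u : Fin n → ℚ, f (fun k => phiAux a (u k)) = α (phiAux a (u i)) := by
    intro u
    exact hev _ (fun j => phiAux_gt a (u j))
  have hc : (fun u : Fin n → ℚ => f (fun k => phiAux a (u k))) ∈ CloneC n := by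
    refine ⟨fun u v h => hf.1 _ _ (fun k => phiAux_mono a (h k)), i, a + 1, α, ?_⟩
    intro u hu
    show f (fun k => phiAux a (u k)) = α (u i)
    rw [hcval u, phiAux_eq a (u i) (le_of_lt (hu i))]
  -- mem of the unary function x ↦ α (phiAux a x)
  have hγ : (fun v : Fin 1 → ℚ => α (phiAux a (v 0))) ∈ CloneC 1 :=
    ⟨fun u v h => α.strictMono (phiAux_mono a (h 0)), 0, a + 1, α,
      fun u hu => by show α (phiAux a (u 0)) = α (u 0); rw [phiAux_eq a (u 0) (le_of_lt (hu 0))]⟩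
  have hβ : (fun v : Fin 1 → ℚ => phiAux a (v 0)) ∈ CloneC 1 :=
    ⟨fun u v h => phiAux_mono a (h 0), 0, a + 1, OrderIso.refl ℚ,
      fun u hu => phiAux_eq a (u 0) (le_of_lt (hu 0))⟩
  have hc' : (fun u : Fin n → ℚ => α (phiAux a (u i))) ∈ CloneC n := by
    have heq : (fun u : Fin n → ℚ => f (fun k => phiAux a (u k)))
        = fun u => α (phiAux a (u i)) := funext hcval
    exact heq ▸ hc
  -- compute ξ of the composite two ways
  have h1 := H.comp_eq n n f hf (fun k => fun u => phiAux a (u k)) hg hc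
  have h2 : H.ξ n (fun u => phiAux a (u (H.ξ n f hf))) (hg (H.ξ n f hf)) = H.ξ n f hf :=
    xi_comp_unary H (phiAux a) hβ _ _
  have h3 : H.ξ n (fun u : Fin n → ℚ => α (phiAux a (u i))) hc' = i :=
    xi_comp_unary H (fun x => α (phiAux a x)) hγ i hc'
  have h4 : H.ξ n (fun u : Fin n → ℚ => f (fun k => phiAux a (u k))) hc
      = H.ξ n (fun u : Fin n → ℚ => α (phiAux a (u i))) hc' :=
    xi_congr H (funext hcval) _ _
  exact (h1.trans h2).symm.trans (h4.trans h3)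

theorem projHom_unique :
    (∀ (H : ProjHom) (n : ℕ) (f : (Fin n → ℚ) → ℚ) (hf : f ∈ CloneC n)
      (i : Fin n) (α : ℚ ≃o ℚ) (a : ℚ),
      EventuallyActsAs f α i a → H.ξ n f hf = i) ∧
    ∀ H H' : ProjHom, H = H' := by

  constructor
  · intro H n f hf i α a hev
    exact xi_eq H f hf i α a hev
  · intro H H'
    have hξ : H.ξ = H'.ξ := by
      funext n f hf
      obtain ⟨_, i, a, α, hev⟩ := id hf
      rw [xi_eq H f _ i α a hev, xi_eq H' f _ i α a hev]
    cases H; cases H'; cases hξ; rfl
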